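/- arXiv:1402.7235 — 3 statements merged into one kernel-verified Lean document; each statement's English description precedes it below -/
import Mathlib

section
/- Let H be a finite loopless graph, let t ≥ 0 and r ≥ 0 be integers, and suppose H admits a proper t-colouring λ such that every vertex of H is adjacent to vertices of at most r distinct colours (other than possibly counting repetitions). Then the chromatic number of H satisfies χ(H) ≤ ⌊tr/(r+1)⌋ + 1. -/
/-- A multigraph: a type of vertices, a type of edges, and an incidence map
sending each edge to an unordered pair of vertices. -/
structure Multigraph (V E : Type) where
  inc : E → Sym2 V

namespace Multigraph

variable {V E : Type}

/-- A multigraph is loopless if no edge joins a vertex to itself. -/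
def Loopless (G : Multigraph V E) : Prop := ∀ e : E, ¬ (G.inc e).IsDiag

/-- A multigraph is simple if it is loopless and has no parallel edges. -/
def Simple (G : Multigraph V E) : Prop := G.Loopless ∧ Function.Injective G.inc

/-- The underlying simple graph of a multigraph. -/
def toSimple (G : Multigraph V E) : SimpleGraph V where
  Adj u v := u ≠ v ∧ ∃ e : E, G.inc e = s(u, v)
  symm := ⟨by
    rintro u v ⟨huv, e, he⟩
    exact ⟨Ne.symm huv, e, by rw [he, Sym2.eq_swap]⟩⟩
  loopless := ⟨by rintro v ⟨h, _⟩; exact h rfl⟩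

/-- The degree of a vertex: the number of edges incident to it. -/
noncomputable def degree (G : Multigraph V E) (v : V) : ℕ := Nat.card {e : E // v ∈ G.inc e}

/-- The number of edges of a multigraph. -/
noncomputable def edgeCard (_G : Multigraph V E) : ℕ := Nat.card E

/-- An `ℓ`-arc (non-backtracking walk of length `ℓ`): an alternating sequence of
vertices and edges with consecutive edges distinct. -/
@[ext]
structure Arc (G : Multigraph V E) (ℓ : ℕ) where
  verts : Fin (ℓ + 1) → V
  edges : Fin ℓ → E
  inc_eq : ∀ i : Fin ℓ, G.inc (edges i) = s(verts i.castSucc, verts i.succ)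
  nb : ∀ i j : Fin ℓ, (i : ℕ) + 1 = (j : ℕ) → edges i ≠ edges j

variable {G : Multigraph V E}

/-- The reverse of an arc. -/
def Arc.reverse {ℓ : ℕ} (A : G.Arc ℓ) : G.Arc ℓ where
  verts i := A.verts i.rev
  edges i := A.edges i.rev
  inc_eq i := by
    show G.inc (A.edges i.rev) = s(A.verts i.castSucc.rev, A.verts i.succ.rev)
    rw [Fin.rev_castSucc, Fin.rev_succ, A.inc_eq i.rev, Sym2.eq_swap]
  nb i j hij h := by
    refine A.nb j.rev i.rev ?_ (h.symm)
    have hi := i.isLt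
    have hj := j.isLt
    simp only [Fin.val_rev]
    omega

lemma Arc.reverse_reverse {ℓ : ℕ} (A : G.Arc ℓ) : A.reverse.reverse = A := by
  ext i
  · show A.verts i.rev.rev = A.verts i
    rw [Fin.rev_rev]
  · show A.edges i.rev.rev = A.edges i
    rw [Fin.rev_rev]

/-- The length-`ℓ` prefix of an `(ℓ+1)`-arc. -/
def Arc.init {ℓ : ℕ} (A : G.Arc (ℓ + 1)) : G.Arc ℓ where
  verts i := A.verts i.castSucc
  edges i := A.edges i.castSucc
  inc_eq i := by
    show G.inc (A.edges i.castSucc) = s(A.verts i.castSucc.castSucc, A.verts i.succ.castSucc)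
    rw [A.inc_eq i.castSucc, Fin.succ_castSucc]
  nb i j hij h := A.nb i.castSucc j.castSucc (by simpa using hij) h

/-- The length-`ℓ` suffix of an `(ℓ+1)`-arc. -/
def Arc.tail {ℓ : ℕ} (A : G.Arc (ℓ + 1)) : G.Arc ℓ where
  verts i := A.verts i.succ
  edges i := A.edges i.succ
  inc_eq i := by
    show G.inc (A.edges i.succ) = s(A.verts i.castSucc.succ, A.verts i.succ.succ)
    rw [A.inc_eq i.succ, Fin.succ_castSucc]
  nb i j hij h := A.nb i.succ j.succ (by simpa using hij) h

lemma Arc.reverse_init {ℓ : ℕ} (A : G.Arc (ℓ + 1)) : A.reverse.init = A.tail.reverse := by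
  ext i
  · show A.verts (Fin.castSucc i).rev = A.verts i.rev.succ
    rw [Fin.rev_castSucc]
  · show A.edges (Fin.castSucc i).rev = A.edges i.rev.succ
    rw [Fin.rev_castSucc]

lemma Arc.reverse_tail {ℓ : ℕ} (A : G.Arc (ℓ + 1)) : A.reverse.tail = A.init.reverse := by
  ext i
  · show A.verts (Fin.succ i).rev = A.verts i.rev.castSucc
    rw [Fin.rev_succ]
  · show A.edges (Fin.succ i).rev = A.edges i.rev.castSucc
    rw [Fin.rev_succ]

/-- The reversal relation on arcs. -/
def LinkRel (G : Multigraph V E) {ℓ : ℕ} (A B : G.Arc ℓ) : Prop := B = A.reverse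

/-- An `ℓ`-link: an `ℓ`-arc up to reversal. -/
def Link (G : Multigraph V E) (ℓ : ℕ) : Type := Quot (G.LinkRel (ℓ := ℓ))

/-- The `ℓ`-link determined by an `ℓ`-arc. -/
def Link.mk {ℓ : ℕ} (A : G.Arc ℓ) : G.Link ℓ := Quot.mk (G.LinkRel) A

lemma Link.mk_reverse {ℓ : ℕ} (A : G.Arc ℓ) : (Link.mk A.reverse : G.Link ℓ) = Link.mk A :=
  (Quot.sound (show G.LinkRel A A.reverse from rfl)).symm

/-- The unordered pair of `ℓ`-links that are the two length-`ℓ` subsequences of an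
`(ℓ+1)`-link. -/
def linkEnds (G : Multigraph V E) {ℓ : ℕ} : G.Link (ℓ + 1) → Sym2 (G.Link ℓ) :=
  Quot.lift (fun A => s(Link.mk A.init, Link.mk A.tail)) (by
    rintro A B rfl
    show s(Link.mk A.init, Link.mk A.tail) = s(Link.mk A.reverse.init, Link.mk A.reverse.tail)
    rw [Arc.reverse_init, Arc.reverse_tail, Link.mk_reverse, Link.mk_reverse, Sym2.eq_swap])

/-- The `ℓ`-link graph of `G`: vertices are the `ℓ`-links, and for each
`(ℓ+1)`-link there is one edge joining its two length-`ℓ` subsequences. -/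
def linkGraph (G : Multigraph V E) (ℓ : ℕ) : Multigraph (G.Link ℓ) (G.Link (ℓ + 1)) where
  inc := G.linkEnds

/-- The set of edges used by an arc. -/
def Arc.edgeSet {ℓ : ℕ} (A : G.Arc ℓ) : Set E := Set.range A.edges

/-- The set of vertices used by an arc. -/
def Arc.vertSet {ℓ : ℕ} (A : G.Arc ℓ) : Set V := Set.range A.verts

lemma Arc.edgeSet_reverse {ℓ : ℕ} (A : G.Arc ℓ) : A.reverse.edgeSet = A.edgeSet := by
  ext e
  constructor
  · rintro ⟨i, rfl⟩; exact ⟨i.rev, rfl⟩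
  · rintro ⟨i, rfl⟩; exact ⟨i.rev, by show A.edges i.rev.rev = _; rw [Fin.rev_rev]⟩

lemma Arc.vertSet_reverse {ℓ : ℕ} (A : G.Arc ℓ) : A.reverse.vertSet = A.vertSet := by
  ext v
  constructor
  · rintro ⟨i, rfl⟩; exact ⟨i.rev, rfl⟩
  · rintro ⟨i, rfl⟩; exact ⟨i.rev, by show A.verts i.rev.rev = _; rw [Fin.rev_rev]⟩

/-- The set of edges used by a link. -/
def Link.edgeSet {ℓ : ℕ} : G.Link ℓ → Set E :=
  Quot.lift Arc.edgeSet (by rintro A B rfl; exact (Arc.edgeSet_reverse A).symm)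

/-- The set of vertices used by a link. -/
def Link.vertSet {ℓ : ℕ} : G.Link ℓ → Set V :=
  Quot.lift Arc.vertSet (by rintro A B rfl; exact (Arc.vertSet_reverse A).symm)

lemma Arc.tail_init_comm {ℓ : ℕ} (A : G.Arc (ℓ + 2)) : A.tail.init = A.init.tail := by
  ext i
  · show A.verts (Fin.castSucc i).succ = A.verts (Fin.succ i).castSucc
    rw [Fin.succ_castSucc]
  · show A.edges (Fin.castSucc i).succ = A.edges (Fin.succ i).castSucc
    rw [Fin.succ_castSucc]

/-- The middle `ℓ`-segment of an `(ℓ+2)`-arc, obtained by deleting the first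
and last edge. -/
def Arc.mid2 {ℓ : ℕ} (A : G.Arc (ℓ + 2)) : G.Arc ℓ := A.tail.init

lemma Arc.mid2_reverse {ℓ : ℕ} (A : G.Arc (ℓ + 2)) : A.reverse.mid2 = A.mid2.reverse := by
  show A.reverse.tail.init = A.tail.init.reverse
  rw [Arc.reverse_tail, Arc.reverse_init, Arc.tail_init_comm]

/-- The middle `ℓ`-segment of an `(ℓ+2)`-link. -/
def Link.mid2 {ℓ : ℕ} : G.Link (ℓ + 2) → G.Link ℓ :=
  Quot.lift (fun A => Link.mk A.mid2) (by
    rintro A B rfl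
    show Link.mk A.mid2 = Link.mk A.reverse.mid2
    rw [Arc.mid2_reverse, Link.mk_reverse])

/-- The middle unit of an arc: its middle vertex if its length is even, and its
middle edge if its length is odd. -/
def Arc.midUnit {ℓ : ℕ} (A : G.Arc ℓ) : V ⊕ E :=
  if h : Even ℓ then Sum.inl (A.verts ⟨ℓ / 2, by omega⟩)
  else Sum.inr (A.edges ⟨ℓ / 2, by
    have : ℓ % 2 = 1 := Nat.not_even_iff.mp h
    omega⟩)

lemma Arc.midUnit_reverse {ℓ : ℕ} (A : G.Arc ℓ) : A.reverse.midUnit = A.midUnit := by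
  by_cases h : Even ℓ
  · rw [Arc.midUnit, Arc.midUnit, dif_pos h, dif_pos h]
    have hk : ℓ % 2 = 0 := Nat.even_iff.mp h
    congr 1
    show A.verts (⟨ℓ / 2, _⟩ : Fin (ℓ + 1)).rev = A.verts _
    congr 1
    ext
    rw [Fin.val_rev]
    show ℓ + 1 - (ℓ / 2 + 1) = ℓ / 2
    omega
  · rw [Arc.midUnit, Arc.midUnit, dif_neg h, dif_neg h]
    have hk : ℓ % 2 = 1 := Nat.not_even_iff.mp h
    congr 1
    show A.edges (⟨ℓ / 2, _⟩ : Fin ℓ).rev = A.edges _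
    congr 1
    ext
    rw [Fin.val_rev]
    show ℓ - (ℓ / 2 + 1) = ℓ / 2
    omega

/-- The middle unit of a link: its middle vertex (even length) or middle edge
(odd length). -/
def Link.midUnit {ℓ : ℕ} : G.Link ℓ → V ⊕ E :=
  Quot.lift Arc.midUnit (by rintro A B rfl; exact (Arc.midUnit_reverse A).symm)

/-- `G` has a (nonnull) subgraph of minimum degree at least `d`. -/
def HasMinDegSubgraph (G : Multigraph V E) (d : ℕ) : Prop :=
  ∃ (V' : Set V) (E' : Set E), V'.Nonempty ∧ (∀ e ∈ E', ∀ v ∈ G.inc e, v ∈ V') ∧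
    ∀ v ∈ V', d ≤ Nat.card {e : E // e ∈ E' ∧ v ∈ G.inc e}

/-- The degeneracy of `G`: the maximum over subgraphs of the minimum degree. -/
noncomputable def degeneracy (G : Multigraph V E) : ℕ := sSup {d | G.HasMinDegSubgraph d}

/-- The edge-chromatic number of a multigraph: the least `t` such that the edges
can be `t`-coloured with edges sharing an endpoint getting distinct colours. -/
noncomputable def edgeChromaticNumber (G : Multigraph V E) : ℕ :=
  sInf {t | ∃ c : E → Fin t, ∀ e f : E, e ≠ f → (∃ v, v ∈ G.inc e ∧ v ∈ G.inc f) → c e ≠ c f}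

/-- The complete bipartite multigraph `K_{n,m}` (one edge for each pair). -/
def completeBipartiteMG (n m : ℕ) : Multigraph (Fin n ⊕ Fin m) (Fin n × Fin m) :=
  ⟨fun p => s(Sum.inl p.1, Sum.inr p.2)⟩

end Multigraph

/-- `H` contains a complete minor on `t` branch sets: `t` pairwise disjoint
nonempty connected subsets of vertices with an edge between every two of them. -/
def SimpleGraph.HasKMinor {W : Type} (H : SimpleGraph W) (t : ℕ) : Prop :=
  ∃ B : Fin t → Set W,
    (∀ i, (B i).Nonempty) ∧
    (∀ i, ((H.induce (B i)).Connected)) ∧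
    (∀ i j, i ≠ j → Disjoint (B i) (B j)) ∧
    (∀ i j, i ≠ j → ∃ u ∈ B i, ∃ v ∈ B j, H.Adj u v)


/-- If a finite loopless graph `H` has a proper `t`-colouring in which
every vertex is adjacent to vertices of at most `r` distinct colours, then
`χ(H) ≤ ⌊tr/(r+1)⌋ + 1`. -/
theorem chromatic_of_few_neighbour_colours {W : Type} [Fintype W] (H : SimpleGraph W)
    (t r : ℕ) (lam : W → Fin t)
    (hproper : ∀ u v : W, H.Adj u v → lam u ≠ lam v)
    (hfew : ∀ u : W, Set.ncard {c : Fin t | ∃ v : W, H.Adj u v ∧ lam v = c} ≤ r) :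
    H.chromaticNumber ≤ ((t * r / (r + 1) + 1 : ℕ) : ℕ∞) := by
  classical
  rcases Nat.eq_zero_or_pos t with ht0 | ht
  · subst ht0
    have hW : IsEmpty W := ⟨fun w => (lam w).elim0⟩
    have hc : H.Colorable 0 :=
      ⟨SimpleGraph.Coloring.mk (fun w => isEmptyElim w) (fun {v w} _ => isEmptyElim v)⟩
    exact le_trans hc.chromaticNumber_le (by simp)
  set s := r + 1 with hs
  have hspos : 0 < s := by omega
  set Elim : ℕ → Prop := fun c => c % s = 0 ∧ c + s < t with hElimdef
  set seen : W → Set (Fin t) := fun u => {c | ∃ v, H.Adj u v ∧ lam v = c} with hseendef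
  obtain ⟨Q, m0, hm0, hQ1, hQ2⟩ : ∃ Q m0, m0 < s ∧ Q + m0 = t - 1 ∧ Q % s = 0 :=
    ⟨s * ((t - 1) / s), (t - 1) % s, Nat.mod_lt _ hspos, Nat.div_add_mod (t - 1) s,
      Nat.mul_mod_right s _⟩
  have hQt : Q < t := by omega
  set σ : Fin t := ⟨Q, hQt⟩ with hσdef
  have hσnE : ¬ Elim σ.1 := by
    intro hE
    have h2 : Q + s < t := hE.2
    omega
  -- key counting lemma for the "spare colour" case
  have case2 : ∀ u : W, Elim (lam u).1 →
      (¬ ∃ c : Fin t, c.1 / s = (lam u).1 / s ∧ ¬ Elim c.1 ∧ c ∉ seen u) →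
      ∀ v : W, H.Adj u v → (lam v).1 % s ≠ 0 := by
    intro u hu hno v hadj hv0
    push_neg at hno
    have hu1 : (lam u).1 % s = 0 := hu.1
    have hu2 : (lam u).1 + s < t := hu.2
    have hg : s * ((lam u).1 / s) = (lam u).1 := by
      have h := Nat.div_add_mod (lam u).1 s
      rw [hu1] at h; simpa using h
    have hlt : ∀ j : Fin s, (lam u).1 + j.1 < t := fun j => by have := j.2; omega
    set G : Fin s → Fin t :=
      fun j => if j.1 = 0 then lam v else ⟨(lam u).1 + j.1, hlt j⟩ with hGdef
    have hmodj : ∀ j : Fin s, ((lam u).1 + j.1) % s = j.1 := by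
      intro j
      rw [← hg, Nat.mul_add_mod, Nat.mod_eq_of_lt j.2]
    have hdivj : ∀ j : Fin s, ((lam u).1 + j.1) / s = (lam u).1 / s := by
      intro j
      conv_lhs => rw [← hg]
      rw [Nat.mul_add_div hspos, Nat.div_eq_of_lt j.2, Nat.add_zero]
    have hGmem : ∀ j, G j ∈ seen u := by
      intro j
      by_cases hj : j.1 = 0
      · simp only [hGdef, if_pos hj]
        exact ⟨v, hadj, rfl⟩
      · simp only [hGdef, if_neg hj]
        refine hno _ (hdivj j) ?_
        intro hE
        have h1 : ((lam u).1 + j.1) % s = 0 := hE.1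
        rw [hmodj j] at h1
        exact hj h1
    have hGinj : Function.Injective G := by
      intro j1 j2 hGeq
      by_cases h1 : j1.1 = 0 <;> by_cases h2 : j2.1 = 0
      · exact Fin.ext (by omega)
      · exfalso
        have heq : lam v = (⟨(lam u).1 + j2.1, hlt j2⟩ : Fin t) := by
          simp only [hGdef, if_pos h1, if_neg h2] at hGeq; exact hGeq
        have hval : (lam v).1 = (lam u).1 + j2.1 := congrArg Fin.val heq
        rw [hval, hmodj j2] at hv0
        exact h2 hv0
      · exfalso
        have heq : (⟨(lam u).1 + j1.1, hlt j1⟩ : Fin t) = lam v := by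
          simp only [hGdef, if_neg h1, if_pos h2] at hGeq; exact hGeq
        have hval : (lam u).1 + j1.1 = (lam v).1 := congrArg Fin.val heq
        rw [← hval, hmodj j1] at hv0
        exact h1 hv0
      · have hval : (lam u).1 + j1.1 = (lam u).1 + j2.1 := by
          have := congrArg Fin.val hGeq
          simp only [hGdef, if_neg h1, if_neg h2] at this; exact this
        exact Fin.ext (by omega)
    set T : Finset (Fin t) := Finset.univ.image G with hT
    have hTcard : T.card = s := by
      rw [hT, Finset.card_image_of_injective _ hGinj, Finset.card_univ, Fintype.card_fin]
    have hsub : (↑T : Set (Fin t)) ⊆ seen u := by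
      intro c hc
      simp only [hT, Finset.coe_image, Set.mem_image, Finset.mem_coe, Finset.mem_univ] at hc
      obtain ⟨j, _, rfl⟩ := hc
      exact hGmem j
    have hle : s ≤ r := by
      calc s = T.card := hTcard.symm
        _ = (↑T : Set (Fin t)).ncard := (Set.ncard_coe_finset T).symm
        _ ≤ (seen u).ncard := Set.ncard_le_ncard hsub (Set.toFinite _)
        _ ≤ r := hfew u
    omega
  -- the new colouring
  set μ : W → Fin t := fun u =>
    if h : Elim (lam u).1 then
      if h2 : ∃ c : Fin t, c.1 / s = (lam u).1 / s ∧ ¬ Elim c.1 ∧ c ∉ seen u then h2.choose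
      else σ
    else lam u
    with hμdef
  have hμspec : ∀ u : W,
      (¬ Elim (lam u).1 ∧ μ u = lam u) ∨
      (Elim (lam u).1 ∧ (μ u).1 / s = (lam u).1 / s ∧ ¬ Elim (μ u).1 ∧ μ u ∉ seen u) ∨
      (Elim (lam u).1 ∧ μ u = σ ∧ ∀ v, H.Adj u v → (lam v).1 % s ≠ 0) := by
    intro u
    by_cases h : Elim (lam u).1
    · by_cases h2 : ∃ c : Fin t, c.1 / s = (lam u).1 / s ∧ ¬ Elim c.1 ∧ c ∉ seen u
      · have hμu : μ u = h2.choose := by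
          simp only [hμdef]; rw [dif_pos h, dif_pos h2]
        obtain ⟨ha, hb, hc⟩ := h2.choose_spec
        refine Or.inr (Or.inl ⟨h, ?_, ?_, ?_⟩)
        · rw [hμu]; exact ha
        · rw [hμu]; exact hb
        · rw [hμu]; exact hc
      · have hμu : μ u = σ := by simp only [hμdef]; rw [dif_pos h, dif_neg h2]
        exact Or.inr (Or.inr ⟨h, hμu, case2 u h h2⟩)
    · have hμu : μ u = lam u := by simp only [hμdef]; rw [dif_neg h]
      exact Or.inl ⟨h, hμu⟩
  have hprop2 : ∀ u v, H.Adj u v → μ u ≠ μ v := by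
    intro u v hadj
    have hsu : lam v ∈ seen u := ⟨v, hadj, rfl⟩
    have hsv : lam u ∈ seen v := ⟨u, hadj.symm, rfl⟩
    rcases hμspec u with ⟨hu1, hu2⟩ | ⟨hu1, hug, huE, hu3⟩ | ⟨hu1, hu2, hu3⟩ <;>
      rcases hμspec v with ⟨hv1, hv2⟩ | ⟨hv1, hvg, hvE, hv3⟩ | ⟨hv1, hv2, hv3⟩
    · rw [hu2, hv2]; exact hproper u v hadj
    · intro he; apply hv3; rw [← he, hu2]; exact hsv
    · intro he
      rw [hu2, hv2] at he
      have h1 : (lam u).1 % s ≠ 0 := hv3 u hadj.symm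
      have h2 : (lam u).1 = σ.1 := congrArg Fin.val he
      rw [h2] at h1
      exact h1 hQ2
    · intro he; apply hu3; rw [he, hv2]; exact hsu
    · by_cases hgg : (lam u).1 / s = (lam v).1 / s
      · exfalso
        have h1 : s * ((lam u).1 / s) = (lam u).1 := by
          have h := Nat.div_add_mod (lam u).1 s
          rw [hu1.1] at h; simpa using h
        have h2 : s * ((lam v).1 / s) = (lam v).1 := by
          have h := Nat.div_add_mod (lam v).1 s
          rw [hv1.1] at h; simpa using h
        exact hproper u v hadj (Fin.ext (by rw [← h1, ← h2, hgg]))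
      · intro he
        exact hgg (by rw [← hug, ← hvg, he])
    · exact absurd hu1.1 (hv3 u hadj.symm)
    · intro he
      rw [hu2, hv2] at he
      have h1 : (lam v).1 % s ≠ 0 := hu3 v hadj
      have h2 : σ.1 = (lam v).1 := congrArg Fin.val he
      rw [← h2] at h1
      exact h1 hQ2
    · exact absurd hv1.1 (hu3 v hadj)
    · exact absurd hv1.1 (hu3 v hadj)
  have hμE : ∀ u, ¬ Elim (μ u).1 := by
    intro u
    rcases hμspec u with ⟨h1, h2⟩ | ⟨_, _, h, _⟩ | ⟨_, h2, _⟩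
    · rw [h2]; exact h1
    · exact h
    · rw [h2]; exact hσnE
  let C : H.Coloring {c : Fin t // ¬ Elim c.1} :=
    SimpleGraph.Coloring.mk (fun u => ⟨μ u, hμE u⟩)
      (fun {a b} hab h => hprop2 a b hab (congrArg Subtype.val h))
  refine le_trans C.colorable.chromaticNumber_le ?_
  rw [Nat.cast_le, Fintype.card_subtype]
  set a := (t - 1) / s with ha
  set b := t * r / s with hb
  have hlow : a ≤ (Finset.univ.filter fun c : Fin t => Elim c.1).card := by
    have hsa : s * a ≤ t - 1 := by
      rw [ha, Nat.mul_comm]; exact Nat.div_mul_le_self _ _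
    have hmap : ∀ j : Fin a, s * j.1 + s ≤ t - 1 := by
      intro j
      have hj1 : j.1 + 1 ≤ a := j.2
      have h1 : s * (j.1 + 1) ≤ s * a := Nat.mul_le_mul le_rfl hj1
      have h3 : s * j.1 + s = s * (j.1 + 1) := by ring
      rw [h3]; exact le_trans h1 hsa
    have hlt : ∀ j : Fin a, s * j.1 < t := by
      intro j
      have h1 := hmap j
      exact lt_of_le_of_lt (le_trans (Nat.le_add_right _ s) h1) (by omega)
    have hcardeq : a = (Finset.univ : Finset (Fin a)).card := by
      rw [Finset.card_univ, Fintype.card_fin]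
    rw [hcardeq]
    apply Finset.card_le_card_of_injOn (fun j : Fin a => (⟨s * j.1, hlt j⟩ : Fin t))
    · intro j _
      simp only [Finset.mem_coe, Finset.mem_filter, Finset.mem_univ, true_and]
      exact ⟨Nat.mul_mod_right s j.1, lt_of_le_of_lt (hmap j) (by omega)⟩
    · intro j1 _ j2 _ hj
      have hval : s * j1.1 = s * j2.1 := congrArg Fin.val hj
      exact Fin.ext (Nat.eq_of_mul_eq_mul_left hspos hval)
  have hsplit : (Finset.univ.filter fun c : Fin t => Elim c.1).card
      + (Finset.univ.filter fun c : Fin t => ¬ Elim c.1).card = t := by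
    rw [Finset.card_filter_add_card_filter_not, Finset.card_univ, Fintype.card_fin]
  have harith : t - a ≤ b + 1 := by
    obtain ⟨m, hm, hqm⟩ : ∃ m, m < s ∧ s * a + m = t - 1 :=
      ⟨(t - 1) % s, Nat.mod_lt _ hspos, Nat.div_add_mod (t - 1) s⟩
    obtain ⟨d, hd⟩ : ∃ d, r = m + d := ⟨r - m, by omega⟩
    have ht2 : t = (s * a + m) + 1 := by rw [hqm]; omega
    have hs2 : s = m + d + 1 := by omega
    have h1 : t * r = s * (a * r + m) + d := by rw [ht2, hd, hs2]; ring
    have hb2 : b = a * r + m := by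
      rw [hb, h1, Nat.mul_add_div hspos, Nat.div_eq_of_lt (by omega : d < s), Nat.add_zero]
    have ht3 : t = a * r + a + m + 1 := by rw [ht2, hs2, hd]; ring
    set X := a * r with hX
    omega
  omega
end

section
/- Let G be a finite loopless multigraph and ℓ ≥ 2. Then χ(L_ℓ(G)) ≤ ⌊(2/3)·χ(L_{ℓ−2}(G))⌋ + 1. -/
/-- The recolouring function: given `n` old colours, a middle colour `c` and the two
side colours `a`, `b`, produce a new colour `< 2*n/3 + 1`. -/
def Dfun (n c a b : ℕ) : ℕ :=
  if c < 3 * (n / 3) then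
    (if c % 3 = 1 then 2 * (c / 3)
     else if c % 3 = 2 then 2 * (c / 3) + 1
     else
       if (a = c + 1 ∧ b = c + 2) ∨ (a = c + 2 ∧ b = c + 1) then 2 * n / 3
       else if a = c + 1 ∨ b = c + 1 then 2 * (c / 3) + 1
       else 2 * (c / 3))
  else if n % 3 = 1 then 2 * n / 3
  else if c = 3 * (n / 3) then (if a = c + 1 ∨ b = c + 1 then 2 * n / 3 else 2 * (n / 3))
  else 2 * (n / 3)

lemma Dfun_symm (n c a b : ℕ) : Dfun n c a b = Dfun n c b a := by
  unfold Dfun; split_ifs <;> omega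

lemma Dfun_lt {n c : ℕ} (a b : ℕ) (h : c < n) : Dfun n c a b < 2 * n / 3 + 1 := by
  unfold Dfun; split_ifs <;> omega

set_option maxHeartbeats 3000000 in
lemma Dfun_main {n c c' a b a' b' : ℕ} (hc : c < n) (hc' : c' < n) (hne : c ≠ c')
    (h1 : a = c' ∨ b = c') (h2 : a' = c ∨ b' = c) :
    Dfun n c a b ≠ Dfun n c' a' b' := by
  unfold Dfun; split_ifs <;> omega

namespace Multigraph

variable {V E : Type} {G : Multigraph V E}

lemma eqvGen_linkRel {m : ℕ} {A B : G.Arc m}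
    (h : Relation.EqvGen (G.LinkRel (ℓ := m)) A B) : B = A ∨ B = A.reverse := by
  induction h with
  | rel x y hxy => exact Or.inr hxy
  | refl x => exact Or.inl rfl
  | symm x y _ ih =>
      rcases ih with rfl | h
      · exact Or.inl rfl
      · subst h; exact Or.inr (x.reverse_reverse).symm
  | trans x y z _ _ ih1 ih2 =>
      rcases ih1 with rfl | rfl
      · exact ih2
      · rcases ih2 with rfl | h
        · exact Or.inr rfl
        · subst h; exact Or.inl (x.reverse_reverse)

lemma link_mk_eq_iff {m : ℕ} {A B : G.Arc m} :
    (Link.mk A : G.Link m) = Link.mk B ↔ B = A ∨ B = A.reverse := by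
  constructor
  · intro h; exact eqvGen_linkRel (Quot.eq.mp h)
  · rintro (rfl | rfl)
    · rfl
    · exact (Link.mk_reverse A).symm

lemma link_init_ne_tail (hG : G.Loopless) {m : ℕ} (D : G.Arc (m + 1)) :
    (Link.mk D.init : G.Link m) ≠ Link.mk D.tail := by
  intro h
  rcases link_mk_eq_iff.mp h with h' | h'
  · -- D.tail = D.init : use verts at 0 to get a loop at edge 0
    have hv : D.verts (Fin.succ ⟨0, by omega⟩) = D.verts (Fin.castSucc ⟨0, by omega⟩) :=
      congrArg (fun X : G.Arc m => X.verts ⟨0, by omega⟩) h'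
    exact hG (D.edges ⟨0, by omega⟩)
      (by rw [D.inc_eq ⟨0, by omega⟩, Sym2.mk_isDiag_iff]; exact hv.symm)
  · -- D.tail = D.init.reverse
    rcases Nat.even_or_odd m with hm | hm
    · -- m even, m = 2s : middle vertex repeats
      obtain ⟨s, hs⟩ := hm
      have hs' : m = 2 * s := by omega
      have hv : D.verts (Fin.succ ⟨s, by omega⟩) =
          D.verts ((⟨s, by omega⟩ : Fin (m + 1)).rev.castSucc) :=
        congrArg (fun X : G.Arc m => X.verts ⟨s, by omega⟩) h'
      have e2 : ((⟨s, by omega⟩ : Fin (m + 1)).rev.castSucc : Fin (m + 2)) =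
          Fin.castSucc ⟨s, by omega⟩ := by
        ext; simp [Fin.val_rev]; omega
      rw [e2] at hv
      exact hG (D.edges ⟨s, by omega⟩)
        (by rw [D.inc_eq ⟨s, by omega⟩, Sym2.mk_isDiag_iff]; exact hv.symm)
    · -- m odd, m = 2s+1 : middle edges repeat consecutively
      obtain ⟨s, hs⟩ := hm
      have he : D.edges (Fin.succ (⟨s, by omega⟩ : Fin m)) =
          D.edges ((⟨s, by omega⟩ : Fin m).rev.castSucc) :=
        congrArg (fun X : G.Arc m => X.edges ⟨s, by omega⟩) h'
      have e2 : ((⟨s, by omega⟩ : Fin m).rev.castSucc : Fin (m + 1)) =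
          (⟨s, by omega⟩ : Fin (m + 1)) := by
        ext; simp [Fin.val_rev]; omega
      rw [e2] at he
      exact D.nb (⟨s, by omega⟩ : Fin (m + 1)) (⟨s + 1, by omega⟩ : Fin (m + 1))
        rfl he.symm

lemma adj_init_tail (hG : G.Loopless) {m : ℕ} (D : G.Arc (m + 1)) :
    (G.linkGraph m).toSimple.Adj (Link.mk D.init) (Link.mk D.tail) :=
  ⟨link_init_ne_tail hG D, Link.mk D, rfl⟩

section Recolour

variable {k n : ℕ} (c₀ : ((G.linkGraph k).toSimple).Coloring (Fin n))

/-- The new colour of a `(k+2)`-arc. -/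
def linkColorFn (A : G.Arc (k + 2)) : ℕ :=
  Dfun n (c₀ (Link.mk A.tail.init)) (c₀ (Link.mk A.init.init)) (c₀ (Link.mk A.tail.tail))

lemma linkColorFn_lt (A : G.Arc (k + 2)) : linkColorFn c₀ A < 2 * n / 3 + 1 :=
  Dfun_lt _ _ (c₀ (Link.mk A.tail.init)).is_lt

lemma linkColorFn_reverse (A : G.Arc (k + 2)) :
    linkColorFn c₀ A.reverse = linkColorFn c₀ A := by
  have h1 : Link.mk A.reverse.tail.init = (Link.mk A.tail.init : G.Link k) := by
    rw [Arc.reverse_tail, Arc.reverse_init, Link.mk_reverse, Arc.tail_init_comm]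
  have h2 : Link.mk A.reverse.init.init = (Link.mk A.tail.tail : G.Link k) := by
    rw [Arc.reverse_init, Arc.reverse_init, Link.mk_reverse]
  have h3 : Link.mk A.reverse.tail.tail = (Link.mk A.init.init : G.Link k) := by
    rw [Arc.reverse_tail, Arc.reverse_tail, Link.mk_reverse]
  unfold linkColorFn
  rw [h1, h2, h3]
  exact Dfun_symm _ _ _ _

lemma linkColorFn_ne (hG : G.Loopless) (C : G.Arc (k + 3)) :
    linkColorFn c₀ C.init ≠ linkColorFn c₀ C.tail := by
  have hmidX : C.init.tail.init = C.tail.init.init := by rw [Arc.tail_init_comm C]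
  have hmidY : C.tail.tail.init = C.tail.init.tail := Arc.tail_init_comm C.tail
  have hY3 : C.init.tail.tail = C.tail.tail.init := by
    rw [hmidY, Arc.tail_init_comm C]
  have hadj := c₀.valid (adj_init_tail hG C.tail.init)
  unfold linkColorFn
  intro hEq
  refine Dfun_main (Fin.is_lt _) (Fin.is_lt _) ?_ ?_ ?_ hEq
  · rw [hmidX, hmidY]
    exact fun hv => hadj (Fin.ext hv)
  · right; rw [hY3]
  · left; rw [hmidX]

/-- The recoloured colouring of the `(k+2)`-link graph. -/
def linkColoring (hG : G.Loopless) :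
    ((G.linkGraph (k + 2)).toSimple).Coloring (Fin (2 * n / 3 + 1)) :=
  SimpleGraph.Coloring.mk
    (Quot.lift (fun A => (⟨linkColorFn c₀ A, linkColorFn_lt c₀ A⟩ : Fin (2 * n / 3 + 1)))
      (by rintro A B rfl
          exact Fin.ext (linkColorFn_reverse c₀ A).symm))
    (by intro X Y hadj
        obtain ⟨hne, e, he⟩ := hadj
        obtain ⟨C, rfl⟩ := Quot.exists_rep e
        have he' : s(Link.mk C.init, Link.mk C.tail) = s(X, Y) := he
        rw [Sym2.eq_iff] at he'
        rcases he' with ⟨hX, hY⟩ | ⟨hX, hY⟩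
        · subst hX; subst hY
          exact fun h => linkColorFn_ne c₀ hG C (congrArg Fin.val h)
        · subst hX; subst hY
          exact fun h => linkColorFn_ne c₀ hG C (congrArg Fin.val h.symm))

end Recolour

end Multigraph


/-- For a finite loopless multigraph `G` and `ℓ ≥ 2`,
`χ(L_ℓ(G)) ≤ ⌊(2/3) χ(L_{ℓ-2}(G))⌋ + 1`. -/
theorem chromatic_linkGraph_rec {V E : Type} [Finite V] [Finite E] (G : Multigraph V E)
    (hG : G.Loopless) (ℓ : ℕ) (hℓ : 2 ≤ ℓ) (n : ℕ)
    (hn : ((G.linkGraph (ℓ - 2)).toSimple).chromaticNumber = n) :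
    ((G.linkGraph ℓ).toSimple).chromaticNumber ≤ ((2 * n / 3 + 1 : ℕ) : ℕ∞) := by
  obtain ⟨k, rfl⟩ : ∃ k, ℓ = k + 2 := ⟨ℓ - 2, by omega⟩
  rw [Nat.add_sub_cancel] at hn
  have hcol : ((G.linkGraph k).toSimple).Colorable n :=
    (SimpleGraph.chromaticNumber_le_iff_colorable).mp hn.le
  obtain ⟨c₀⟩ := hcol
  exact SimpleGraph.Colorable.chromaticNumber_le ⟨Multigraph.linkColoring c₀ hG⟩
end

section
/- Let G be a finite loopless multigraph with chromatic number χ and let ℓ ≥ 0 be even. Then χ(L_ℓ(G)) ≤ min{χ, ⌊(2/3)^{ℓ/2}(χ−3)⌋ + 3}. -/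
namespace LinkProof

open Multigraph

/-! ### The combinatorial colour rule -/

/-- The recolouring rule sending a "cherry" (middle colour `a`, end colours
`s₁, s₂`) in a `k`-coloured graph to one of `⌊2k/3⌋ + 1` colours. -/
def cherryCol (k a s₁ s₂ : ℕ) : ℕ :=
  if a % 3 = 0 then
    (if k % 3 = 1 ∧ a = k - 1 then 0 else 1 + 2 * (a / 3))
  else if a % 3 = 1 then
    (if a = k - 1 then (if a - 1 = s₁ ∨ a - 1 = s₂ then 0 else 1 + 2 * (a / 3))
     else 2 + 2 * (a / 3))
  else
    (if 3 * (a / 3) = s₁ ∨ 3 * (a / 3) = s₂ then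
      (if 3 * (a / 3) + 1 = s₁ ∨ 3 * (a / 3) + 1 = s₂ then 0 else 2 + 2 * (a / 3))
     else 1 + 2 * (a / 3))

lemma cherryCol_comm (k a s₁ s₂ : ℕ) : cherryCol k a s₁ s₂ = cherryCol k a s₂ s₁ := by
  unfold cherryCol
  split_ifs <;> omega

lemma cherryCol_lt {k a : ℕ} (ha : a < k) (s₁ s₂ : ℕ) : cherryCol k a s₁ s₂ < 2 * k / 3 + 1 := by
  unfold cherryCol
  split_ifs <;> omega

lemma cherryCol_ne {k a b s₁ s₂ t₁ t₂ : ℕ} (ha : a < k) (hb : b < k) (hab : a ≠ b)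
    (h1 : b = s₁ ∨ b = s₂) (h2 : a = t₁ ∨ a = t₂) :
    cherryCol k a s₁ s₂ ≠ cherryCol k b t₁ t₂ := by
  unfold cherryCol
  split_ifs <;> omega

/-! ### Basic facts about links -/

variable {V E : Type} {G : Multigraph V E}

lemma link_mk_eq_iff {ℓ : ℕ} {A B : G.Arc ℓ} :
    (Link.mk A : G.Link ℓ) = Link.mk B ↔ (B = A ∨ B = A.reverse) := by
  constructor
  · intro h
    have h' : Relation.EqvGen (G.LinkRel) A B := Quot.eq.mp h
    clear h
    induction h' with
    | rel x y hxy => exact Or.inr hxy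
    | refl x => exact Or.inl rfl
    | symm x y _ ih =>
      rcases ih with rfl | rfl
      · exact Or.inl rfl
      · exact Or.inr (x.reverse_reverse).symm
    | trans x y z _ _ ih1 ih2 =>
      rcases ih2 with rfl | rfl
      · exact ih1
      · rcases ih1 with rfl | rfl
        · exact Or.inr rfl
        · exact Or.inl (x.reverse_reverse)
  · rintro (rfl | rfl)
    · rfl
    · exact (Link.mk_reverse A).symm

/-- The two ends of an `(m+1)`-link of a loopless multigraph are distinct. -/
lemma ends_ne {m : ℕ} (hG : G.Loopless) (A : G.Arc (m + 1)) :
    (Link.mk A.init : G.Link m) ≠ Link.mk A.tail := by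
  intro h
  rcases link_mk_eq_iff.mp h with h1 | h1
  · -- A.tail = A.init : consecutive vertices coincide
    have hv : A.verts (Fin.succ 0) = A.verts (Fin.castSucc 0) :=
      congrFun (congrArg Arc.verts h1) 0
    exact hG (A.edges 0) (by rw [A.inc_eq 0]; exact Sym2.mk_isDiag_iff.mpr hv.symm)
  · -- A.tail = A.init.reverse
    have hv : ∀ j : Fin (m + 1), A.verts j.succ = A.verts (Fin.castSucc j.rev) :=
      fun j => congrFun (congrArg Arc.verts h1) j
    have hedges : ∀ i : Fin m, A.edges i.succ = A.edges (Fin.castSucc i.rev) :=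
      fun i => congrFun (congrArg Arc.edges h1) i
    rcases Nat.even_or_odd m with he | ho
    · -- m even: vertex contradiction in the middle
      have hm2 : m % 2 = 0 := Nat.even_iff.mp he
      set j : Fin (m + 1) := ⟨m / 2, by omega⟩ with hj
      have hrev : j.rev = j := by
        ext
        simp only [Fin.val_rev, hj]
        omega
      have hv' : A.verts j.succ = A.verts (Fin.castSucc j) := by
        have := hv j; rw [hrev] at this; exact this
      exact hG (A.edges j) (by rw [A.inc_eq j]; exact Sym2.mk_isDiag_iff.mpr hv'.symm)
    · -- m odd: consecutive edges coincide
      have hm2 : m % 2 = 1 := Nat.odd_iff.mp ho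
      have hmpos : 0 < m := by omega
      set i : Fin m := ⟨m / 2, by omega⟩ with hi
      have hrev : i.rev = i := by
        ext
        simp only [Fin.val_rev, hi]
        omega
      have he' : A.edges i.succ = A.edges (Fin.castSucc i) := by
        have := hedges i; rw [hrev] at this; exact this
      exact A.nb (Fin.castSucc i) i.succ (by simp) he'.symm

lemma toSimple_adj {u v : V} : G.toSimple.Adj u v ↔ u ≠ v ∧ ∃ e : E, G.inc e = s(u, v) :=
  Iff.rfl

/-! ### The middle-vertex homomorphism: χ(L_{2m}) ≤ χ(G) -/

/-- The middle vertex of a link of even length. -/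
def linkMidV {m : ℕ} : G.Link (m + m) → V :=
  Quot.lift (fun A : G.Arc (m + m) => A.verts ⟨m, by omega⟩) (by
    rintro A B rfl
    show A.verts ⟨m, by omega⟩ = A.verts (Fin.rev ⟨m, by omega⟩)
    congr 1
    ext
    simp only [Fin.val_rev]
    omega)

lemma linkMidV_adj {m : ℕ} (hG : G.Loopless) (A : G.Arc (m + m + 1)) :
    G.toSimple.Adj (linkMidV (Link.mk A.init)) (linkMidV (Link.mk A.tail)) := by
  have hinc : G.inc (A.edges ⟨m, by omega⟩)
      = s(linkMidV (Link.mk A.init), linkMidV (Link.mk A.tail)) :=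
    A.inc_eq ⟨m, by omega⟩
  refine ⟨fun hEq => ?_, A.edges ⟨m, by omega⟩, hinc⟩
  exact hG (A.edges ⟨m, by omega⟩) (by rw [hinc, hEq]; exact Sym2.mk_isDiag_iff.mpr rfl)

lemma colorable_link_double {m n : ℕ} (hG : G.Loopless) (h : G.toSimple.Colorable n) :
    ((G.linkGraph (m + m)).toSimple).Colorable n := by
  obtain ⟨C⟩ := h
  refine ⟨SimpleGraph.Coloring.mk (fun L => C (linkMidV L)) ?_⟩
  intro u v huv
  obtain ⟨hne, e, he⟩ := huv
  obtain ⟨A, rfl⟩ := Quot.exists_rep e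
  have he' : s(Link.mk A.init, Link.mk A.tail) = s(u, v) := he
  rcases Sym2.eq_iff.mp he' with ⟨h1, h2⟩ | ⟨h1, h2⟩
  · rw [← h1, ← h2]; exact C.valid (linkMidV_adj hG A)
  · rw [← h1, ← h2]; exact (C.valid (linkMidV_adj hG A)).symm

/-! ### The recolouring step: χ(L_{ℓ+2}) ≤ ⌊2 χ(L_ℓ)/3⌋ + 1 -/

lemma colorable_link_step {ℓ k : ℕ} (hG : G.Loopless)
    (h : ((G.linkGraph ℓ).toSimple).Colorable k) :
    ((G.linkGraph (ℓ + 2)).toSimple).Colorable (2 * k / 3 + 1) := by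
  obtain ⟨φ⟩ := h
  set f : G.Arc (ℓ + 2) → ℕ := fun A =>
    cherryCol k (φ (Link.mk A.mid2)) (φ (Link.mk A.init.init)) (φ (Link.mk A.tail.tail))
    with hfdef
  have hf : ∀ A : G.Arc (ℓ + 2), f A.reverse = f A := by
    intro A
    have h1 : A.reverse.init.init = A.tail.tail.reverse := by
      rw [Arc.reverse_init, Arc.reverse_init]
    have h2 : A.reverse.tail.tail = A.init.init.reverse := by
      rw [Arc.reverse_tail, Arc.reverse_tail]
    show cherryCol k (φ (Link.mk A.reverse.mid2)) (φ (Link.mk A.reverse.init.init))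
        (φ (Link.mk A.reverse.tail.tail)) = _
    rw [h1, h2, Arc.mid2_reverse, Link.mk_reverse, Link.mk_reverse, Link.mk_reverse]
    exact cherryCol_comm _ _ _ _
  set Ψ : G.Link (ℓ + 2) → ℕ := Quot.lift f (by rintro A B rfl; exact (hf A).symm) with hΨdef
  have hΨlt : ∀ L, Ψ L < 2 * k / 3 + 1 := by
    intro L
    obtain ⟨A, rfl⟩ := Quot.exists_rep L
    exact cherryCol_lt (φ _).isLt _ _
  have key : ∀ B : G.Arc (ℓ + 2 + 1), Ψ (Link.mk B.init) ≠ Ψ (Link.mk B.tail) := by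
    intro B
    show f B.init ≠ f B.tail
    have hcomm1 : B.init.tail = B.tail.init := (Arc.tail_init_comm B).symm
    have hadj : ((G.linkGraph ℓ).toSimple).Adj (Link.mk B.init.mid2) (Link.mk B.tail.mid2) := by
      have e1 : B.init.mid2 = B.mid2.init := by
        show B.init.tail.init = B.tail.init.init
        rw [hcomm1]
      have e2 : B.tail.mid2 = B.mid2.tail := by
        show B.tail.tail.init = B.tail.init.tail
        exact Arc.tail_init_comm B.tail
      rw [e1, e2]
      exact ⟨ends_ne hG B.mid2, Link.mk B.mid2, rfl⟩
    have hmema : Link.mk B.init.mid2 = Link.mk B.tail.init.init := by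
      apply congrArg Link.mk
      show B.init.tail.init = B.tail.init.init
      rw [hcomm1]
    have hmemb : Link.mk B.tail.mid2 = Link.mk B.init.tail.tail := by
      apply congrArg Link.mk
      show B.tail.tail.init = B.init.tail.tail
      rw [Arc.tail_init_comm B.tail, hcomm1]
    apply cherryCol_ne (φ _).isLt (φ _).isLt
    · exact fun hh => (φ.valid hadj) (Fin.val_injective hh)
    · exact Or.inr (congrArg (fun L => ((φ L : Fin k) : ℕ)) hmemb)
    · exact Or.inl (congrArg (fun L => ((φ L : Fin k) : ℕ)) hmema)
  refine ⟨SimpleGraph.Coloring.mk (fun L => (⟨Ψ L, hΨlt L⟩ : Fin (2 * k / 3 + 1))) ?_⟩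
  intro u v huv
  obtain ⟨hne, e, he⟩ := huv
  obtain ⟨A, rfl⟩ := Quot.exists_rep e
  have he' : s(Link.mk A.init, Link.mk A.tail) = s(u, v) := he
  rcases Sym2.eq_iff.mp he' with ⟨h1, h2⟩ | ⟨h1, h2⟩
  · rw [← h1, ← h2]
    exact fun hh => key A (congrArg Fin.val hh)
  · rw [← h1, ← h2]
    exact fun hh => key A (congrArg Fin.val hh).symm

/-! ### Arithmetic -/

lemma arith_step (x y : ℕ) (hy : 0 < y) : 2 * (x / y + 3) / 3 + 1 ≤ 2 * x / (y * 3) + 3 := by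
  have h1 : 2 * (x / y) ≤ 2 * x / y := by
    rw [Nat.le_div_iff_mul_le hy]
    calc 2 * (x / y) * y = 2 * (x / y * y) := by ring
    _ ≤ 2 * x := Nat.mul_le_mul_left 2 (Nat.div_mul_le_self x y)
  have h2 : 2 * (x / y) / 3 ≤ (2 * x / y) / 3 := Nat.div_le_div_right h1
  rw [Nat.div_div_eq_div_mul] at h2
  omega

end LinkProof

/-- For a finite loopless multigraph `G` with chromatic number `c` and
even `ℓ ≥ 0`, `χ(L_ℓ(G)) ≤ min {c, ⌊(2/3)^(ℓ/2) (c-3)⌋ + 3}`. -/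
theorem chromatic_linkGraph_even {V E : Type} [Finite V] [Finite E] (G : Multigraph V E)
    (hG : G.Loopless) (ℓ : ℕ) (heven : Even ℓ) (c : ℕ)
    (hc : G.toSimple.chromaticNumber = c) :
    ((G.linkGraph ℓ).toSimple).chromaticNumber
      ≤ ((min c (2 ^ (ℓ / 2) * (c - 3) / 3 ^ (ℓ / 2) + 3) : ℕ) : ℕ∞) := by
  classical
  obtain ⟨m, rfl⟩ := heven
  have hd2 : (m + m) / 2 = m := by omega
  rw [hd2]
  have hGc : G.toSimple.Colorable c :=
    SimpleGraph.chromaticNumber_le_iff_colorable.mp (le_of_eq hc)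
  have h1 : ((G.linkGraph (m + m)).toSimple).Colorable c :=
    LinkProof.colorable_link_double hG hGc
  have h2 : ∀ j : ℕ, ((G.linkGraph (j + j)).toSimple).Colorable (2 ^ j * (c - 3) / 3 ^ j + 3) := by
    intro j
    induction j with
    | zero =>
      refine (LinkProof.colorable_link_double hG hGc).mono ?_
      simp only [pow_zero, one_mul, Nat.div_one]
      omega
    | succ j ih =>
      have hidx : j + 1 + (j + 1) = j + j + 2 := by omega
      rw [hidx]
      refine (LinkProof.colorable_link_step hG ih).mono ?_
      have hstep := LinkProof.arith_step (2 ^ j * (c - 3)) (3 ^ j) (pow_pos (by norm_num : (0:ℕ) < 3) j)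
      calc 2 * (2 ^ j * (c - 3) / 3 ^ j + 3) / 3 + 1
          ≤ 2 * (2 ^ j * (c - 3)) / (3 ^ j * 3) + 3 := hstep
        _ = 2 ^ (j + 1) * (c - 3) / 3 ^ (j + 1) + 3 := by
            have e1 : 2 * (2 ^ j * (c - 3)) = 2 ^ (j + 1) * (c - 3) := by ring
            have e2 : 3 ^ j * 3 = 3 ^ (j + 1) := (pow_succ 3 j).symm
            rw [e1, e2]
  rcases le_total c (2 ^ m * (c - 3) / 3 ^ m + 3) with hle | hle
  · rw [min_eq_left hle]
    exact h1.chromaticNumber_le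
  · rw [min_eq_right hle]
    exact (h2 m).chromaticNumber_le
end
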